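/- The image of the group Γ(2) in PSL₂(ℤ) is a free group of rank 2, freely generated by the images A of the matrix [[1,2],[0,1]] and B of the matrix [[1,0],[2,1]]. -/

import Mathlib

open Matrix

local notation "SL2Z" => Matrix.SpecialLinearGroup (Fin 2) ℤ

section PingPong
open Monoid Cardinal Pointwise

theorem myPingPong {ι : Type} [Nontrivial ι] {G : Type*} [Group G] {α : Type*} [MulAction G α]
    (a : ι → G) (X : ι → Set α)
    (hne : ∀ i, (X i).Nonempty) (hdisj : Pairwise (Function.onFun Disjoint X))
    (hpow : ∀ i j, i ≠ j → ∀ n : ℤ, n ≠ 0 → (a i) ^ n • X j ⊆ X i) :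
    Function.Injective (FreeGroup.lift a) := by
  have key : FreeGroup.lift a =
      (Monoid.CoprodI.lift fun i => FreeGroup.lift fun _ : Unit => a i).comp
        (@freeGroupEquivCoprodI ι).toMonoidHom := by
    ext i
    simp
  rw [key, MonoidHom.coe_comp]
  refine Function.Injective.comp ?_ (MulEquiv.injective freeGroupEquivCoprodI)
  let H : ι → Type := fun _ => FreeGroup Unit
  let f : ∀ i, H i →* G := fun i => FreeGroup.lift fun _ => a i
  apply Monoid.CoprodI.lift_injective_of_ping_pong f ?_ X hne hdisj
  · intro i j hij
    refine FreeGroup.freeGroupUnitEquivInt.forall_congr_left.mpr ?_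
    intro n hne1
    change FreeGroup.lift (fun _ => a i) (FreeGroup.of () ^ n) • X j ⊆ X i
    simp only [map_zpow, FreeGroup.lift_apply_of]
    refine hpow i j hij n ?_
    rintro rfl
    apply hne1
    simp [H, FreeGroup.freeGroupUnitEquivInt]
  · right
    refine ⟨Classical.arbitrary ι, ?_⟩
    rw [FreeGroup.freeGroupUnitEquivInt.cardinal_eq, Cardinal.mk_denumerable]
    exact (Cardinal.nat_lt_aleph0 3).le

end PingPong


def A0 : SL2Z := ⟨!![1, 2; 0, 1], by simp [Matrix.det_fin_two_of]⟩
def B0 : SL2Z := ⟨!![1, 0; 2, 1], by simp [Matrix.det_fin_two_of]⟩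

lemma A0_inv : A0⁻¹ = ⟨!![1, -2; 0, 1], by simp [Matrix.det_fin_two_of]⟩ := by
  apply inv_eq_of_mul_eq_one_right
  apply Subtype.ext
  show (A0 : Matrix (Fin 2) (Fin 2) ℤ) * _ = (1 : Matrix (Fin 2) (Fin 2) ℤ)
  simp [A0, Matrix.mul_fin_two]
  decide

lemma B0_inv : B0⁻¹ = ⟨!![1, 0; -2, 1], by simp [Matrix.det_fin_two_of]⟩ := by
  apply inv_eq_of_mul_eq_one_right
  apply Subtype.ext
  show (B0 : Matrix (Fin 2) (Fin 2) ℤ) * _ = (1 : Matrix (Fin 2) (Fin 2) ℤ)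
  simp [B0, Matrix.mul_fin_two]
  decide

lemma coe_A0_zpow (n : ℤ) : ((A0 ^ n : SL2Z) : Matrix (Fin 2) (Fin 2) ℤ) = !![1, 2*n; 0, 1] := by
  induction n using Int.induction_on with
  | zero => norm_num; decide
  | succ k ih =>
    rw [_root_.zpow_add_one, Matrix.SpecialLinearGroup.coe_mul, ih]
    show _ = _
    simp [A0, Matrix.mul_fin_two]; ring
  | pred k ih =>
    rw [_root_.zpow_sub_one, Matrix.SpecialLinearGroup.coe_mul, ih, A0_inv]
    show _ * (!![1,-2;0,1] : Matrix (Fin 2) (Fin 2) ℤ) = _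
    simp [Matrix.mul_fin_two]; ring

lemma coe_B0_zpow (n : ℤ) : ((B0 ^ n : SL2Z) : Matrix (Fin 2) (Fin 2) ℤ) = !![1, 0; 2*n, 1] := by
  induction n using Int.induction_on with
  | zero => norm_num; decide
  | succ k ih =>
    rw [_root_.zpow_add_one, Matrix.SpecialLinearGroup.coe_mul, ih]
    show _ = _
    simp [B0, Matrix.mul_fin_two]; ring
  | pred k ih =>
    rw [_root_.zpow_sub_one, Matrix.SpecialLinearGroup.coe_mul, ih, B0_inv]
    show _ * (!![1,0;-2,1] : Matrix (Fin 2) (Fin 2) ℤ) = _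
    simp [Matrix.mul_fin_two]; ring

def pmSetoid : Setoid (Fin 2 → ℤ) where
  r v w := v = w ∨ v = -w
  iseqv := by
    constructor
    · intro v; left; rfl
    · rintro v w (rfl | rfl); · left; rfl
      · right; simp
    · rintro u v w (rfl | rfl) (rfl | rfl)
      · left; rfl
      · right; rfl
      · right; rfl
      · left; simp

def PV := Quotient pmSetoid

instance : MulAction SL2Z PV where
  smul g := Quotient.map (fun v => (g : Matrix (Fin 2) (Fin 2) ℤ) *ᵥ v) (by
    rintro v w (rfl | rfl)
    · exact Or.inl rfl
    · right; simp [Matrix.mulVec_neg])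
  one_smul q := by
    induction q using Quotient.ind
    show Quotient.map _ _ _ = _
    simp [Quotient.map_mk, Matrix.SpecialLinearGroup.coe_one]
  mul_smul g h q := by
    induction q using Quotient.ind
    show Quotient.map _ _ _ = Quotient.map _ _ (Quotient.map _ _ _)
    simp [Quotient.map_mk, Matrix.SpecialLinearGroup.coe_mul, Matrix.mulVec_mulVec]
    congr 1; funext i; fin_cases i <;> simp [Matrix.mul_apply, Fin.sum_univ_two] <;> ring

def af : PV → ℤ := Quotient.lift (fun v => |v 0|) (by rintro v w (rfl | rfl) <;> simp)
def bf : PV → ℤ := Quotient.lift (fun v => |v 1|) (by rintro v w (rfl | rfl) <;> simp)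

def mkPV (v : Fin 2 → ℤ) : PV := Quotient.mk pmSetoid v

lemma pv_smul_mk (g : SL2Z) (v : Fin 2 → ℤ) :
    g • mkPV v = mkPV ((g : Matrix (Fin 2) (Fin 2) ℤ) *ᵥ v) := rfl

lemma af_mk (v : Fin 2 → ℤ) : af (mkPV v) = |v 0| := rfl
lemma bf_mk (v : Fin 2 → ℤ) : bf (mkPV v) = |v 1| := rfl


lemma neg_one_smul_pv (q : PV) : (-1 : SL2Z) • q = q := by
  induction q using Quotient.ind with
  | _ v =>
    show (-1 : SL2Z) • mkPV v = mkPV v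
    rw [pv_smul_mk]
    apply Quotient.sound
    right
    simp [Matrix.neg_mulVec, Matrix.one_mulVec]

lemma center_cases {g : SL2Z} (hg : g ∈ Subgroup.center SL2Z) : g = 1 ∨ g = -1 := by
  obtain ⟨r, hr, hscalar⟩ := Matrix.SpecialLinearGroup.mem_center_iff.mp hg
  have hr' : r = 1 ∨ r = -1 := by
    have h2 : r ^ 2 = 1 := by simpa using hr
    have := Int.isUnit_iff.mp (IsUnit.of_mul_eq_one (a := r) r (by linear_combination h2))
    tauto
  rcases hr' with rfl | rfl
  · left
    apply Matrix.SpecialLinearGroup.ext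
    intro i j
    have h2 := congr_fun (congr_fun hscalar i) j
    have h3 : scalar (Fin 2) (1 : ℤ) i j = ((1 : SL2Z) : Matrix (Fin 2) (Fin 2) ℤ) i j := by
      rcases eq_or_ne i j with rfl | h
      · simp [Matrix.scalar_apply]
      · simp [Matrix.scalar_apply, Matrix.diagonal_apply_ne _ h, h]
    exact h2.symm.trans h3
  · right
    apply Matrix.SpecialLinearGroup.ext
    intro i j
    have h2 := congr_fun (congr_fun hscalar i) j
    have h3 : scalar (Fin 2) (-1 : ℤ) i j = ((-1 : SL2Z) : Matrix (Fin 2) (Fin 2) ℤ) i j := by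
      rcases eq_or_ne i j with rfl | h
      · simp [Matrix.scalar_apply]
      · simp [Matrix.scalar_apply, Matrix.diagonal_apply_ne _ h, h]
    exact h2.symm.trans h3

section
open Pointwise
-- ping-pong sets
def XT : Set PV := {q | bf q < af q}
def XF : Set PV := {q | af q < bf q}

lemma ineq_key {x y : ℤ} (n : ℤ) (hn : n ≠ 0) (h : |x| < |y|) : |y| < |x + 2 * n * y| := by
  have h1 : 1 ≤ |n| := Int.one_le_abs hn
  have h2 : |2 * n * y| ≤ |x + 2 * n * y| + |x| := by
    calc |2 * n * y| = |(x + 2 * n * y) + (-x)| := by ring_nf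
    _ ≤ |x + 2 * n * y| + |(-x)| := abs_add_le _ _
    _ = |x + 2 * n * y| + |x| := by rw [abs_neg]
  have h3 : |2 * n * y| = 2 * |n| * |y| := by
    rw [abs_mul, abs_mul]
    simp
  nlinarith [abs_nonneg y, abs_nonneg x]

def ρ : SL2Z →* Equiv.Perm PV := MulAction.toPermHom SL2Z PV

lemma perm_lift_injective :
    Function.Injective (FreeGroup.lift (fun b : Bool => if b then ρ A0 else ρ B0)) := by
  apply myPingPong _ (fun b => if b then XT else XF)
  · intro i
    cases i
    · exact ⟨mkPV ![0, 1], by simp [XF, af_mk, bf_mk]⟩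
    · exact ⟨mkPV ![1, 0], by simp [XT, af_mk, bf_mk]⟩
  · intro i j hij
    have key : Disjoint XT XF := by
      rw [Set.disjoint_left]
      intro q hq hq'
      have h1 : bf q < af q := hq
      have h2 : af q < bf q := hq'
      omega
    cases i <;> cases j <;>
      first
      | exact absurd rfl hij
      | simpa [Function.onFun] using key
      | simpa [Function.onFun] using key.symm
  · intro i j hij n hn
    cases i <;> cases j <;> try exact absurd rfl hij
    · -- i = false, j = true : B0 powers send XT into XF
      show (ρ B0) ^ n • XT ⊆ XF
      rintro q ⟨p, hp, rfl⟩
      induction p using Quotient.ind with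
      | _ v =>
      have hv : |v 0| > |v 1| := hp
      show (ρ B0) ^ n • mkPV v ∈ XF
      have heq : (ρ B0) ^ n • (mkPV v : PV) = mkPV ![v 0, v 1 + 2 * n * v 0] := by
        rw [← map_zpow]
        show (B0 ^ n) • mkPV v = _
        rw [pv_smul_mk, coe_B0_zpow]
        congr 1
        funext i
        fin_cases i <;>
          simp [Matrix.mulVec, dotProduct, Fin.sum_univ_two] <;> ring
      rw [heq]
      show af _ < bf _
      rw [af_mk, bf_mk]
      simpa using ineq_key n hn hv
    · -- i = true, j = false : A0 powers send XF into XT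
      show (ρ A0) ^ n • XF ⊆ XT
      rintro q ⟨p, hp, rfl⟩
      induction p using Quotient.ind with
      | _ v =>
      have hv : |v 0| < |v 1| := hp
      show (ρ A0) ^ n • mkPV v ∈ XT
      have heq : (ρ A0) ^ n • (mkPV v : PV) = mkPV ![v 0 + 2 * n * v 1, v 1] := by
        rw [← map_zpow]
        show (A0 ^ n) • mkPV v = _
        rw [pv_smul_mk, coe_A0_zpow]
        congr 1
        funext i
        fin_cases i <;>
          simp [Matrix.mulVec, dotProduct, Fin.sum_univ_two] <;> ring
      rw [heq]
      show bf _ < af _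
      rw [af_mk, bf_mk]
      simpa using ineq_key n hn hv

lemma rho_neg_one : ρ (-1) = 1 := by
  apply Equiv.ext
  intro q
  exact neg_one_smul_pv q

def ρbar : (SL2Z ⧸ Subgroup.center SL2Z) →* Equiv.Perm PV :=
  QuotientGroup.lift (Subgroup.center SL2Z) ρ (by
    intro g hg
    rcases center_cases hg with rfl | rfl
    · exact map_one ρ
    · exact rho_neg_one)

lemma psl_lift_injective :
    Function.Injective (FreeGroup.lift (fun b : Bool =>
      if b then (QuotientGroup.mk' (Subgroup.center SL2Z)) A0
      else (QuotientGroup.mk' (Subgroup.center SL2Z)) B0)) := by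
  have hcomp : ρbar.comp (FreeGroup.lift (fun b : Bool =>
      if b then (QuotientGroup.mk' (Subgroup.center SL2Z)) A0
      else (QuotientGroup.mk' (Subgroup.center SL2Z)) B0)) =
      FreeGroup.lift (fun b : Bool => if b then ρ A0 else ρ B0) := by
    apply FreeGroup.ext_hom
    intro b
    cases b <;> simp [ρbar]
  have := perm_lift_injective
  rw [← hcomp] at this
  exact Function.Injective.of_comp this

end
section Part2
open CongruenceSubgroup

lemma round_div_pos (a c : ℤ) (hc : 0 < c) : ∃ q r : ℤ, a = 2*c*q + r ∧ |r| ≤ |c| := by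
  refine ⟨(a + c) / (2*c), a - 2*c*((a + c)/(2*c)), by ring, ?_⟩
  have h2c : 0 < 2*c := by omega
  have hmod := Int.emod_nonneg (a + c) (by omega : (2*c) ≠ 0)
  have hlt := Int.emod_lt_of_pos (a + c) h2c
  have hdiv := Int.mul_ediv_add_emod (a + c) (2*c)
  rw [abs_of_pos hc, abs_le]
  constructor <;> nlinarith [hdiv, hmod, hlt]

lemma round_div (a c : ℤ) (hc : c ≠ 0) : ∃ q r : ℤ, a = 2*c*q + r ∧ |r| ≤ |c| := by
  rcases lt_or_gt_of_ne hc with h | h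
  · obtain ⟨q, r, h1, h2⟩ := round_div_pos a (-c) (by omega)
    refine ⟨-q, r, by linarith [h1], ?_⟩
    rwa [abs_neg] at h2
  · exact round_div_pos a c h

lemma odd_of_cast {x : ℤ} (h : (x : ZMod 2) = 1) : x % 2 = 1 := by
  have h1 : (x : ZMod 2) = ((1 : ℤ) : ZMod 2) := by simpa using h
  have h2 := (ZMod.intCast_eq_intCast_iff _ _ _).mp h1
  simpa [Int.ModEq] using h2

lemma even_of_cast {x : ℤ} (h : (x : ZMod 2) = 0) : x % 2 = 0 := by
  have := (ZMod.intCast_zmod_eq_zero_iff_dvd x 2).mp h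
  omega

lemma gamma2_parity {g : SL2Z} (hg : g ∈ Gamma 2) :
    (g : Matrix (Fin 2) (Fin 2) ℤ) 0 0 % 2 = 1 ∧ (g : Matrix (Fin 2) (Fin 2) ℤ) 0 1 % 2 = 0 ∧
    (g : Matrix (Fin 2) (Fin 2) ℤ) 1 0 % 2 = 0 ∧ (g : Matrix (Fin 2) (Fin 2) ℤ) 1 1 % 2 = 1 := by
  rw [Gamma_mem] at hg
  obtain ⟨h1, h2, h3, h4⟩ := hg
  exact ⟨odd_of_cast h1, even_of_cast h2, even_of_cast h3, odd_of_cast h4⟩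

lemma A0_mem : A0 ∈ Gamma 2 := by
  rw [Gamma_mem]
  refine ⟨?_, ?_, ?_, ?_⟩ <;> (show ((A0 : Matrix (Fin 2) (Fin 2) ℤ) _ _ : ZMod 2) = _) <;>
    simp [A0] <;> decide

lemma B0_mem : B0 ∈ Gamma 2 := by
  rw [Gamma_mem]
  refine ⟨?_, ?_, ?_, ?_⟩ <;> (show ((B0 : Matrix (Fin 2) (Fin 2) ℤ) _ _ : ZMod 2) = _) <;>
    simp [B0] <;> decide

end Part2
section Part3
open CongruenceSubgroup Subgroup

lemma mul_entry_e (M N : Matrix (Fin 2) (Fin 2) ℤ) (i j : Fin 2) :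
    (M * N) i j = M i 0 * N 0 j + M i 1 * N 1 j := by
  simp [Matrix.mul_apply, Fin.sum_univ_two]

lemma key_aux : ∀ k : ℕ, ∀ g : SL2Z, g ∈ Gamma 2 →
    ((g : Matrix (Fin 2) (Fin 2) ℤ) 1 0).natAbs ≤ k →
    g ∈ Subgroup.closure ({A0, B0, -1} : Set SL2Z) := by
  intro k
  induction k with
  | zero =>
    intro g hg hc
    obtain ⟨ha, hb, hcp, hd⟩ := gamma2_parity hg
    set M := (g : Matrix (Fin 2) (Fin 2) ℤ) with hM
    have hc0 : M 1 0 = 0 := Int.natAbs_eq_zero.mp (Nat.le_zero.mp hc)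
    have hdet : M 0 0 * M 1 1 - M 0 1 * M 1 0 = 1 := by
      rw [← Matrix.det_fin_two]
      exact g.prop
    have had : M 0 0 * M 1 1 = 1 := by rw [hc0] at hdet; linarith
    obtain ⟨t, ht⟩ : ∃ t, M 0 1 = 2 * t := ⟨M 0 1 / 2, by omega⟩
    rcases Int.eq_one_or_neg_one_of_mul_eq_one' had with ⟨h1, h2⟩ | ⟨h1, h2⟩
    · have hcoe : M = !![1, 2*t; 0, 1] := by
        rw [Matrix.eta_fin_two M, h1, h2, hc0, ht]
      have hgeq : g = A0 ^ t := Subtype.ext (hcoe.trans (coe_A0_zpow t).symm)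
      rw [hgeq]
      exact zpow_mem (subset_closure (by simp)) t
    · have hcoe : M = !![-1, 2*t; 0, -1] := by
        rw [Matrix.eta_fin_two M, h1, h2, hc0, ht]
      have hcoe2 : ((-1 * A0 ^ (-t) : SL2Z) : Matrix (Fin 2) (Fin 2) ℤ) = !![-1, 2*t; 0, -1] := by
        rw [Matrix.SpecialLinearGroup.coe_mul, coe_A0_zpow]
        ext i j
        fin_cases i <;> fin_cases j <;>
          simp [mul_entry_e, Matrix.SpecialLinearGroup.coe_neg,
            Matrix.SpecialLinearGroup.coe_one] <;> ring
      have hgeq : g = -1 * A0 ^ (-t) := Subtype.ext (hcoe.trans hcoe2.symm)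
      rw [hgeq]
      exact mul_mem (subset_closure (by simp)) (zpow_mem (subset_closure (by simp)) _)
  | succ k ih =>
    intro g hg hc
    by_cases hk : ((g : Matrix (Fin 2) (Fin 2) ℤ) 1 0).natAbs ≤ k
    · exact ih g hg hk
    obtain ⟨ha, hb, hcp, hd⟩ := gamma2_parity hg
    set M := (g : Matrix (Fin 2) (Fin 2) ℤ) with hM
    have hc0 : M 1 0 ≠ 0 := by
      intro h
      exact hk (by rw [hM] at h ⊢; simp [h])
    obtain ⟨q, r, hqr, hr⟩ := round_div (M 0 0) (M 1 0) hc0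
    have hrodd : r % 2 = 1 := by
      have h2 : (2 * M 1 0 * q) % 2 = 0 := by
        have he : 2 * M 1 0 * q = 2 * (M 1 0 * q) := by ring
        rw [he]
        exact Int.mul_emod_right 2 _
      omega
    have hrne : r ≠ 0 := by omega
    have hrabs : (r.natAbs : ℤ) ≤ ((M 1 0).natAbs : ℤ) := by
      rw [Int.abs_eq_natAbs, Int.abs_eq_natAbs] at hr
      exact_mod_cast hr
    have hrlt : r.natAbs < (M 1 0).natAbs := by
      have hne : r.natAbs ≠ (M 1 0).natAbs := by
        intro he
        rcases Int.natAbs_eq_natAbs_iff.mp he with h | h <;> omega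
      omega
    obtain ⟨m, s, hms, hs⟩ := round_div (M 1 0) r hrne
    set g2 : SL2Z := B0 ^ (-m) * (A0 ^ (-q) * g) with hg2
    have hg2coe : (g2 : Matrix (Fin 2) (Fin 2) ℤ) =
        !![1, 0; 2*(-m), 1] * (!![1, 2*(-q); 0, 1] * M) := by
      rw [hg2, Matrix.SpecialLinearGroup.coe_mul, Matrix.SpecialLinearGroup.coe_mul,
        coe_A0_zpow, coe_B0_zpow, ← hM]
    have hN00 : (!![(1:ℤ), 2*(-q); 0, 1] * M) 0 0 = r := by
      rw [mul_entry_e]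
      simp
      linear_combination hqr
    have hN10 : (!![(1:ℤ), 2*(-q); 0, 1] * M) 1 0 = M 1 0 := by
      rw [mul_entry_e]
      simp
    have h210 : (g2 : Matrix (Fin 2) (Fin 2) ℤ) 1 0 = s := by
      rw [hg2coe, mul_entry_e, hN00, hN10]
      simp
      linear_combination hms
    have hg2mem : g2 ∈ Gamma 2 := mul_mem (zpow_mem B0_mem _) (mul_mem (zpow_mem A0_mem _) hg)
    have hsabs : (s.natAbs : ℤ) ≤ (r.natAbs : ℤ) := by
      rw [Int.abs_eq_natAbs, Int.abs_eq_natAbs] at hs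
      exact_mod_cast hs
    have hbound : ((g2 : Matrix (Fin 2) (Fin 2) ℤ) 1 0).natAbs ≤ k := by
      rw [h210]
      omega
    have hcl := ih g2 hg2mem hbound
    have hgrec : g = A0 ^ q * (B0 ^ m * g2) := by
      rw [hg2]
      group
    rw [hgrec]
    exact mul_mem (zpow_mem (subset_closure (by simp)) q)
      (mul_mem (zpow_mem (subset_closure (by simp)) m) hcl)

lemma gamma2_le : Gamma 2 ≤ Subgroup.closure ({A0, B0, -1} : Set SL2Z) :=
  fun g hg => key_aux ((g : Matrix (Fin 2) (Fin 2) ℤ) 1 0).natAbs g hg le_rfl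

end Part3

lemma neg_one_mem_center : (-1 : SL2Z) ∈ Subgroup.center SL2Z :=
  Subgroup.mem_center_iff.mpr fun h => by rw [mul_neg, neg_mul, mul_one, one_mul]

/-- The image of `Γ(2)` in `PSL₂(ℤ) = SL₂(ℤ)/{±I}` (realized as the quotient of `SL₂(ℤ)` by
its center) is a free group of rank 2, freely generated by the images of
`A = [[1,2],[0,1]]` and `B = [[1,0],[2,1]]`: the homomorphism from the free group on two
generators sending the generators to those images is injective, with range the image of `Γ(2)`. -/
theorem gamma_two_image_free :
    ∀ (A B : SL2Z), (A : Matrix (Fin 2) (Fin 2) ℤ) = !![1, 2; 0, 1] →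
    (B : Matrix (Fin 2) (Fin 2) ℤ) = !![1, 0; 2, 1] →
    Function.Injective
      (FreeGroup.lift (fun b : Bool =>
        if b then (QuotientGroup.mk' (Subgroup.center SL2Z)) A
        else (QuotientGroup.mk' (Subgroup.center SL2Z)) B)) ∧
    (FreeGroup.lift (fun b : Bool =>
        if b then (QuotientGroup.mk' (Subgroup.center SL2Z)) A
        else (QuotientGroup.mk' (Subgroup.center SL2Z)) B)).range =
      (CongruenceSubgroup.Gamma 2).map (QuotientGroup.mk' (Subgroup.center SL2Z)) := by
  intro A B hA hB
  have hA0 : A = A0 := Subtype.ext hA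
  have hB0 : B = B0 := Subtype.ext hB
  subst hA0 hB0
  refine ⟨psl_lift_injective, ?_⟩
  rw [FreeGroup.range_lift_eq_closure]
  have hrange : Set.range (fun b : Bool =>
      if b then (QuotientGroup.mk' (Subgroup.center SL2Z)) A0
      else (QuotientGroup.mk' (Subgroup.center SL2Z)) B0) =
      {(QuotientGroup.mk' (Subgroup.center SL2Z)) A0,
       (QuotientGroup.mk' (Subgroup.center SL2Z)) B0} := by
    ext x
    constructor
    · rintro ⟨b, rfl⟩
      cases b
      · right; rfl
      · left; rfl
    · rintro (rfl | rfl)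
      · exact ⟨true, rfl⟩
      · exact ⟨false, rfl⟩
  rw [hrange]
  apply le_antisymm
  · rw [Subgroup.closure_le]
    rintro x (rfl | rfl)
    · exact ⟨A0, A0_mem, rfl⟩
    · exact ⟨B0, B0_mem, rfl⟩
  · rintro x ⟨g, hg, rfl⟩
    have h1 : g ∈ Subgroup.closure ({A0, B0, -1} : Set SL2Z) := gamma2_le hg
    have h2 : (QuotientGroup.mk' (Subgroup.center SL2Z)) g ∈
        Subgroup.map (QuotientGroup.mk' (Subgroup.center SL2Z))
          (Subgroup.closure ({A0, B0, -1} : Set SL2Z)) := ⟨g, h1, rfl⟩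
    rw [MonoidHom.map_closure] at h2
    refine Subgroup.closure_le _ |>.mpr ?_ h2
    rintro y ⟨z, hz, rfl⟩
    rcases hz with rfl | rfl | rfl
    · exact Subgroup.subset_closure (by simp)
    · exact Subgroup.subset_closure (by simp)
    · have : (QuotientGroup.mk' (Subgroup.center SL2Z)) (-1) = 1 :=
        (QuotientGroup.eq_one_iff (-1)).mpr neg_one_mem_center
      rw [this]
      exact Subgroup.one_mem _
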